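/- Let X be a complex Banach space, Y ⊆ X a closed hyperplane (codimension-one closed subspace), and T ∈ L(X) with sup_n ‖Tⁿ‖ < ∞ and T(Y) ⊆ Y. If the restriction T|_Y : Y → Y is uniformly mean ergodic, then T is uniformly mean ergodic. -/

import Mathlib

open Filter Topology

open Finset

/-- The `n`-th Cesàro mean `(1/n) ∑_{j=1}^n T^j` of a continuous linear operator. -/
noncomputable def cesaroMean {X : Type*} [NormedAddCommGroup X] [NormedSpace ℂ X]
    (T : X →L[ℂ] X) (n : ℕ) : X →L[ℂ] X :=
  (n : ℂ)⁻¹ • ∑ j ∈ Finset.range n, T ^ (j + 1)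

namespace Stmt16

variable {E : Type*} [NormedAddCommGroup E] [NormedSpace ℂ E]

lemma cesaro_apply (S : E →L[ℂ] E) (n : ℕ) (y : E) :
    cesaroMean S n y = (n : ℂ)⁻¹ • ∑ j ∈ Finset.range n, (S ^ (j + 1)) y := by
  simp [cesaroMean, ContinuousLinearMap.sum_apply]

lemma mul_cesaro_sub (S : E →L[ℂ] E) (n : ℕ) :
    S * cesaroMean S n - cesaroMean S n = (n : ℂ)⁻¹ • (S ^ (n + 1) - S) := by
  unfold cesaroMean
  rw [mul_smul_comm, ← smul_sub, Finset.mul_sum, ← Finset.sum_sub_distrib]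
  congr 1
  calc ∑ j ∈ range n, (S * S ^ (j + 1) - S ^ (j + 1))
      = ∑ j ∈ range n, (S ^ (j + 1 + 1) - S ^ (j + 1)) := by simp_rw [← pow_succ']
    _ = S ^ (n + 1) - S ^ (0 + 1) := Finset.sum_range_sub (fun j => S ^ (j + 1)) n
    _ = S ^ (n + 1) - S := by rw [zero_add, pow_one]

lemma cesaro_comm (S : E →L[ℂ] E) (n : ℕ) :
    cesaroMean S n * S = S * cesaroMean S n := by
  unfold cesaroMean
  rw [smul_mul_assoc, mul_smul_comm, Finset.sum_mul, Finset.mul_sum]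
  simp_rw [← pow_succ, ← pow_succ']

variable {S P : E →L[ℂ] E} {C : ℝ}

lemma tendsto_mul_cesaro (hC : ∀ n : ℕ, ‖S ^ n‖ ≤ C)
    (hP : Tendsto (cesaroMean S) atTop (𝓝 P)) :
    Tendsto (fun n => S * cesaroMean S n) atTop (𝓝 P) := by
  have h0 : Tendsto (fun n : ℕ => S * cesaroMean S n - cesaroMean S n) atTop (𝓝 0) := by
    apply squeeze_zero_norm (a := fun n : ℕ => 2 * C / n)
    · intro n
      have hb : ‖S ^ (n + 1) - S‖ ≤ 2 * C := by
        calc ‖S ^ (n + 1) - S‖ ≤ ‖S ^ (n + 1)‖ + ‖S‖ := norm_sub_le _ _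
          _ ≤ C + C := add_le_add (hC (n + 1)) (by simpa using hC 1)
          _ = 2 * C := by ring
      rw [mul_cesaro_sub]
      calc ‖(n : ℂ)⁻¹ • (S ^ (n + 1) - S)‖ = ‖(n : ℂ)⁻¹‖ * ‖S ^ (n + 1) - S‖ :=
            norm_smul (β := E →L[ℂ] E) _ _
        _ = (n : ℝ)⁻¹ * ‖S ^ (n + 1) - S‖ := by rw [norm_inv, Complex.norm_natCast]
        _ ≤ (n : ℝ)⁻¹ * (2 * C) := mul_le_mul_of_nonneg_left hb (by positivity)
        _ = 2 * C / n := by rw [div_eq_inv_mul]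
    · exact tendsto_const_div_atTop_nhds_zero_nat _
  have h := h0.add hP
  simpa using h

lemma SP_eq (hC : ∀ n : ℕ, ‖S ^ n‖ ≤ C) (hP : Tendsto (cesaroMean S) atTop (𝓝 P)) :
    S * P = P :=
  tendsto_nhds_unique (hP.const_mul S) (tendsto_mul_cesaro hC hP)

lemma PS_eq (hC : ∀ n : ℕ, ‖S ^ n‖ ≤ C) (hP : Tendsto (cesaroMean S) atTop (𝓝 P)) :
    P * S = P := by
  refine tendsto_nhds_unique (f := fun n => cesaroMean S n * S) (hP.mul_const S) ?_
  simp_rw [cesaro_comm]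
  exact tendsto_mul_cesaro hC hP

lemma pow_mul_P (hSP : S * P = P) : ∀ k : ℕ, S ^ k * P = P
  | 0 => by simp
  | k + 1 => by rw [pow_succ', mul_assoc, pow_mul_P hSP k, hSP]

lemma P_mul_pow (hPS : P * S = P) : ∀ k : ℕ, P * S ^ k = P
  | 0 => by simp
  | k + 1 => by rw [pow_succ, ← mul_assoc, P_mul_pow hPS k, hPS]

lemma cesaro_mul_P (hSP : S * P = P) (n : ℕ) (hn : n ≠ 0) :
    cesaroMean S n * P = P := by
  unfold cesaroMean
  rw [smul_mul_assoc, Finset.sum_mul]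
  simp_rw [pow_mul_P hSP]
  rw [Finset.sum_const, Finset.card_range, ← Nat.cast_smul_eq_nsmul ℂ, smul_smul,
    inv_mul_cancel₀ (Nat.cast_ne_zero.mpr hn), one_smul]

lemma P_mul_cesaro (hPS : P * S = P) (n : ℕ) (hn : n ≠ 0) :
    P * cesaroMean S n = P := by
  unfold cesaroMean
  rw [mul_smul_comm, Finset.mul_sum]
  simp_rw [P_mul_pow hPS]
  rw [Finset.sum_const, Finset.card_range, ← Nat.cast_smul_eq_nsmul ℂ, smul_smul,
    inv_mul_cancel₀ (Nat.cast_ne_zero.mpr hn), one_smul]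

lemma P_idem (hC : ∀ n : ℕ, ‖S ^ n‖ ≤ C) (hP : Tendsto (cesaroMean S) atTop (𝓝 P)) :
    P * P = P := by
  refine tendsto_nhds_unique (f := fun n => cesaroMean S n * P) (hP.mul_const P) ?_
  refine Tendsto.congr' ?_ (tendsto_const_nhds (x := P))
  filter_upwards [eventually_ne_atTop 0] with n hn
  exact (cesaro_mul_P (SP_eq hC hP) n hn).symm

lemma tendsto_apply (hP : Tendsto (cesaroMean S) atTop (𝓝 P)) (y : E) :
    Tendsto (fun n => cesaroMean S n y) atTop (𝓝 (P y)) := by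
  have h := tendsto_iff_norm_sub_tendsto_zero.mp hP
  rw [tendsto_iff_norm_sub_tendsto_zero]
  apply squeeze_zero_norm (a := fun n => ‖cesaroMean S n - P‖ * ‖y‖)
  · intro n
    simpa [ContinuousLinearMap.sub_apply] using (cesaroMean S n - P).le_opNorm y
  · simpa using h.mul_const ‖y‖

lemma exists_solution [CompleteSpace E] (hC : ∀ n : ℕ, ‖S ^ n‖ ≤ C)
    (hP : Tendsto (cesaroMean S) atTop (𝓝 P)) (u : E) (hu : P u = 0) :
    ∃ v : E, v - S v = u ∧ P v = 0 := by
  have hSP := SP_eq hC hP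
  have hPS := PS_eq hC hP
  have hPP := P_idem hC hP
  have hev : ∀ᶠ n : ℕ in atTop, ‖cesaroMean S n - P‖ < 1 := by
    have h := tendsto_iff_norm_sub_tendsto_zero.mp hP
    exact h.eventually_lt_const one_pos
  obtain ⟨N, hN1, hNlt⟩ : ∃ N : ℕ, N ≠ 0 ∧ ‖cesaroMean S N - P‖ < 1 :=
    ((eventually_ne_atTop 0).and hev).exists
  set G : E →L[ℂ] E := cesaroMean S N - P with hG
  have hPG : P * G = 0 := by
    rw [hG, mul_sub, P_mul_cesaro hPS N hN1, hPP, sub_self]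
  have hGP : G * P = 0 := by
    rw [hG, sub_mul, cesaro_mul_P hSP N hN1, hPP, sub_self]
  set W : (E →L[ℂ] E)ˣ := Units.oneSub G hNlt with hW
  have hWval : (W : E →L[ℂ] E) = 1 - G := rfl
  have hPW : P * ↑W⁻¹ = P := by
    have h1 : P * (W : E →L[ℂ] E) = P := by rw [hWval, mul_sub, mul_one, hPG, sub_zero]
    calc P * (↑W⁻¹ : E →L[ℂ] E) = P * ↑W * ↑W⁻¹ := by rw [h1]
      _ = P := Units.mul_inv_cancel_right P W
  have hgeom : ∀ m : ℕ, (1 - S) * ∑ k ∈ range m, S ^ k = 1 - S ^ m := by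
    intro m
    have hc : (∑ k ∈ range m, S ^ k) * S = S * ∑ k ∈ range m, S ^ k := by
      rw [Finset.sum_mul, Finset.mul_sum]
      simp_rw [← pow_succ, ← pow_succ']
    have hg := geom_sum_mul S m
    have h2 : (1 - S) * ∑ k ∈ range m, S ^ k = -((∑ k ∈ range m, S ^ k) * (S - 1)) := by
      rw [mul_sub, sub_mul, one_mul, mul_one, hc, neg_sub]
    rw [h2, hg, neg_sub]
  set B : E →L[ℂ] E := (N : ℂ)⁻¹ • ∑ j ∈ range N, ∑ k ∈ range (j + 1), S ^ k with hBdef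
  have hB : (1 - S) * B = 1 - cesaroMean S N := by
    rw [hBdef, mul_smul_comm, Finset.mul_sum]
    simp_rw [hgeom]
    rw [Finset.sum_sub_distrib, Finset.sum_const, Finset.card_range, smul_sub]
    congr 1
    rw [← Nat.cast_smul_eq_nsmul ℂ, smul_smul, inv_mul_cancel₀ (Nat.cast_ne_zero.mpr hN1),
      one_smul]
  have hPB : P * B = ((N : ℂ)⁻¹ * ∑ j ∈ range N, ((j : ℂ) + 1)) • P := by
    rw [hBdef, mul_smul_comm, Finset.mul_sum]
    simp_rw [Finset.mul_sum, P_mul_pow hPS, Finset.sum_const, Finset.card_range,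
      ← Nat.cast_smul_eq_nsmul ℂ, Nat.cast_add, Nat.cast_one]
    rw [← Finset.sum_smul, smul_smul]
    congr 1
    rw [Finset.mul_sum]
  set s : E := (↑W⁻¹ : E →L[ℂ] E) u with hs
  have hPs : P s = 0 := by
    rw [hs, ← ContinuousLinearMap.mul_apply, hPW, hu]
  refine ⟨B s, ?_, ?_⟩
  · have h1 : ((1 - S) * B) s = B s - S (B s) := by
      simp [ContinuousLinearMap.mul_apply, ContinuousLinearMap.sub_apply]
    have h3 : cesaroMean S N s = G s := by
      have : cesaroMean S N = G + P := by rw [hG, sub_add_cancel]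
      rw [this, ContinuousLinearMap.add_apply, hPs, add_zero]
    have h4 : s - G s = u := by
      have h5 : ((1 - G) : E →L[ℂ] E) s = u := by
        rw [← hWval, hs, ← ContinuousLinearMap.mul_apply, Units.mul_inv,
          ContinuousLinearMap.one_apply]
      simpa [ContinuousLinearMap.sub_apply] using h5
    have h6 := congrArg (fun A : E →L[ℂ] E => A s) hB
    simp only [h1] at h6
    rw [h6]
    simp only [ContinuousLinearMap.sub_apply, ContinuousLinearMap.one_apply, h3]
    exact h4
  · rw [← ContinuousLinearMap.mul_apply, hPB, ContinuousLinearMap.smul_apply, hPs, smul_zero]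

end Stmt16

set_option maxHeartbeats 2000000 in
open Stmt16 in
/-- If a power-bounded operator restricts to a closed hyperplane (the kernel of a nonzero
continuous functional) and the restriction is uniformly mean ergodic, then so is the
operator itself. -/
theorem stmt_16 {X : Type*} [NormedAddCommGroup X] [NormedSpace ℂ X] [CompleteSpace X]
    (Y : Submodule ℂ X) (f : X →L[ℂ] ℂ) (hf : f ≠ 0) (hY : Y = LinearMap.ker (f : X →ₗ[ℂ] ℂ))
    (T : X →L[ℂ] X) (C : ℝ) (hbd : ∀ n : ℕ, ‖T ^ n‖ ≤ C)
    (hinv : ∀ y ∈ Y, T y ∈ Y)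
    (S : Y →L[ℂ] Y) (hS : ∀ y : Y, (S y : X) = T y)
    (hume : ∃ P : Y →L[ℂ] Y, Tendsto (cesaroMean S) atTop (𝓝 P)) :
    ∃ Q : X →L[ℂ] X, Tendsto (cesaroMean T) atTop (𝓝 Q) := by
  subst hY
  obtain ⟨P, hP⟩ := hume
  obtain ⟨x', hx'⟩ := DFunLike.ne_iff.mp hf
  set x₀ : X := (f x')⁻¹ • x' with hx₀def
  have hx₀ : f x₀ = 1 := by
    simp only [hx₀def, map_smul, smul_eq_mul]
    exact inv_mul_cancel₀ hx'
  have hC0 : 0 ≤ C := le_trans (norm_nonneg _) (hbd 0)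
  have hpow : ∀ (k : ℕ) (y : ↥(LinearMap.ker (f : X →ₗ[ℂ] ℂ))), ((S ^ k) y : X) = (T ^ k) y := by
    intro k
    induction k with
    | zero => intro y; simp
    | succ k ih =>
      intro y
      rw [pow_succ, pow_succ, ContinuousLinearMap.mul_apply, ContinuousLinearMap.mul_apply,
        ih (S y), hS y]
  have hSC : ∀ k : ℕ, ‖S ^ k‖ ≤ C := by
    intro k
    refine ContinuousLinearMap.opNorm_le_bound _ hC0 fun y => ?_
    have h1 : ‖(S ^ k) y‖ = ‖((S ^ k) y : X)‖ := rfl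
    have h2 : ‖y‖ = ‖(y : X)‖ := rfl
    rw [h1, hpow k y, h2]
    calc ‖(T ^ k) (y : X)‖ ≤ ‖T ^ k‖ * ‖(y : X)‖ := (T ^ k).le_opNorm _
      _ ≤ C * ‖(y : X)‖ := mul_le_mul_of_nonneg_right (hbd k) (norm_nonneg _)
  have hcoeM : ∀ (n : ℕ) (y : ↥(LinearMap.ker (f : X →ₗ[ℂ] ℂ))),
      ((cesaroMean S n y : X)) = cesaroMean T n ↑y := by
    intro n y
    rw [cesaro_apply, cesaro_apply]
    rw [Submodule.coe_smul, AddSubmonoidClass.coe_finset_sum]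
    congr 1
    exact Finset.sum_congr rfl fun j _ => hpow (j + 1) y
  set lam : ℂ := f (T x₀) with hlamdef
  have humem : T x₀ - lam • x₀ ∈ LinearMap.ker (f : X →ₗ[ℂ] ℂ) := by
    rw [LinearMap.mem_ker, ContinuousLinearMap.coe_coe, map_sub]
    have h2 : f (lam • x₀) = lam := by rw [map_smul, smul_eq_mul, hx₀, mul_one]
    rw [h2, hlamdef, sub_self]
  set u : ↥(LinearMap.ker (f : X →ₗ[ℂ] ℂ)) := ⟨T x₀ - lam • x₀, humem⟩ with hudef
  have hucoe : (u : X) = T x₀ - lam • x₀ := rfl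
  set Yn : ℕ → ↥(LinearMap.ker (f : X →ₗ[ℂ] ℂ)) :=
    fun n => ∑ k ∈ Finset.range n, lam ^ (n - 1 - k) • (S ^ k) u with hYndef
  have hrec : ∀ n : ℕ, Yn (n + 1) = S (Yn n) + lam ^ n • u := by
    intro n
    simp only [hYndef]
    rw [Finset.sum_range_succ' (fun k => lam ^ (n + 1 - 1 - k) • (S ^ k) u) n]
    rw [map_sum]
    congr 1
    · refine Finset.sum_congr rfl fun k hk => ?_
      rw [map_smul, pow_succ', ContinuousLinearMap.mul_apply]
      congr 2
      omega
  have hTn : ∀ n : ℕ, (T ^ n) x₀ = lam ^ n • x₀ + ↑(Yn n) := by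
    intro n
    induction n with
    | zero => simp [hYndef]
    | succ n ih =>
      rw [pow_succ', ContinuousLinearMap.mul_apply, ih, map_add, map_smul, ← hS (Yn n),
        hrec n, Submodule.coe_add, Submodule.coe_smul, hucoe]
      rw [pow_succ]
      module
  have hfTn : ∀ n : ℕ, f ((T ^ n) x₀) = lam ^ n := by
    intro n
    rw [hTn n, map_add, map_smul, hx₀, smul_eq_mul, mul_one,
      (by have h := LinearMap.mem_ker.mp (Yn n).2; rwa [ContinuousLinearMap.coe_coe] at h : f ↑(Yn n) = 0), add_zero]
  have hlam1 : ‖lam‖ ≤ 1 := by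
    by_contra h
    push_neg at h
    have hb : ∀ n : ℕ, ‖lam‖ ^ n ≤ ‖f‖ * (C * ‖x₀‖) := by
      intro n
      rw [← norm_pow, ← hfTn n]
      calc ‖f ((T ^ n) x₀)‖ ≤ ‖f‖ * ‖(T ^ n) x₀‖ := f.le_opNorm _
        _ ≤ ‖f‖ * (‖T ^ n‖ * ‖x₀‖) := by
            exact mul_le_mul_of_nonneg_left ((T ^ n).le_opNorm _) (norm_nonneg f)
        _ ≤ ‖f‖ * (C * ‖x₀‖) := by
            refine mul_le_mul_of_nonneg_left ?_ (norm_nonneg f)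
            exact mul_le_mul_of_nonneg_right (hbd n) (norm_nonneg _)
    obtain ⟨n, hn⟩ :=
      ((tendsto_pow_atTop_atTop_of_one_lt h).eventually_gt_atTop (‖f‖ * (C * ‖x₀‖))).exists
    exact absurd (hb n) (not_le.mpr hn)
  have hYnbd : ∀ n : ℕ, ‖Yn n‖ ≤ (C + 1) * ‖x₀‖ := by
    intro n
    have h1 : ((Yn n : X)) = (T ^ n) x₀ - lam ^ n • x₀ := by rw [hTn n]; abel
    have h2 : ‖Yn n‖ = ‖((Yn n : X))‖ := rfl
    rw [h2, h1]
    calc ‖(T ^ n) x₀ - lam ^ n • x₀‖ ≤ ‖(T ^ n) x₀‖ + ‖lam ^ n • x₀‖ := norm_sub_le _ _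
      _ ≤ C * ‖x₀‖ + 1 * ‖x₀‖ := by
          refine add_le_add ?_ ?_
          · exact le_trans ((T ^ n).le_opNorm _)
              (mul_le_mul_of_nonneg_right (hbd n) (norm_nonneg _))
          · rw [norm_smul (β := X), norm_pow]
            exact mul_le_mul_of_nonneg_right (pow_le_one₀ (norm_nonneg _) hlam1)
              (norm_nonneg _)
      _ = (C + 1) * ‖x₀‖ := by ring
  have hA : ∀ n : ℕ, ∑ j ∈ Finset.range n, Yn (j + 1)
      = ∑ k ∈ Finset.range n, (∑ i ∈ Finset.range (n - k), lam ^ i) • (S ^ k) u := by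
    intro n
    induction n with
    | zero => simp
    | succ n ih =>
      rw [Finset.sum_range_succ, ih]
      have hsplit : ∀ k ∈ Finset.range (n + 1),
          (∑ i ∈ Finset.range (n + 1 - k), lam ^ i) • (S ^ k) u
          = (∑ i ∈ Finset.range (n - k), lam ^ i) • (S ^ k) u
            + lam ^ (n - k) • (S ^ k) u := by
        intro k hk
        have hk' : k ≤ n := by simpa [Nat.lt_succ_iff] using hk
        rw [show n + 1 - k = (n - k) + 1 by omega, Finset.sum_range_succ, add_smul]
      rw [Finset.sum_congr rfl hsplit, Finset.sum_add_distrib]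
      congr 1
      · rw [Finset.sum_range_succ]
        simp
  have hRx : ∀ n : ℕ, cesaroMean T n x₀
      = ((n : ℂ)⁻¹ * ∑ j ∈ Finset.range n, lam ^ (j + 1)) • x₀
        + ((((n : ℂ)⁻¹ • ∑ j ∈ Finset.range n, Yn (j + 1) : ↥(LinearMap.ker (f : X →ₗ[ℂ] ℂ)))) : X) := by
    intro n
    rw [cesaro_apply]
    have hsum : ∑ j ∈ Finset.range n, (T ^ (j + 1)) x₀
        = (∑ j ∈ Finset.range n, lam ^ (j + 1)) • x₀
          + ((∑ j ∈ Finset.range n, Yn (j + 1) : ↥(LinearMap.ker (f : X →ₗ[ℂ] ℂ))) : X) := by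
      rw [Finset.sum_congr rfl fun j _ => hTn (j + 1), Finset.sum_add_distrib,
        ← Finset.sum_smul, AddSubmonoidClass.coe_finset_sum]
    rw [hsum, smul_add, Submodule.coe_smul, smul_smul]
  have hmain : ∃ q : X, Tendsto (fun n => cesaroMean T n x₀) atTop (𝓝 q) := by
    by_cases hl : lam = 1
    · -- case lam = 1
      have hPu : P u = 0 := by
        have h1 : ∀ n : ℕ, cesaroMean S n u = (n : ℂ)⁻¹ • S (Yn n) := by
          intro n
          rw [cesaro_apply]
          congr 1
          rw [map_sum]
          refine Finset.sum_congr rfl fun k hk => ?_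
          rw [map_smul, hl, one_pow, one_smul, pow_succ', ContinuousLinearMap.mul_apply]
        have h2 : Tendsto (fun n => cesaroMean S n u) atTop (𝓝 0) := by
          apply squeeze_zero_norm (a := fun n : ℕ => C * ((C + 1) * ‖x₀‖) / n)
          · intro n
            rw [h1 n]
            calc ‖(n : ℂ)⁻¹ • S (Yn n)‖
                = ‖(n : ℂ)⁻¹‖ * ‖S (Yn n)‖ := norm_smul (β := ↥(LinearMap.ker (f : X →ₗ[ℂ] ℂ))) _ _
              _ = (n : ℝ)⁻¹ * ‖S (Yn n)‖ := by rw [norm_inv, Complex.norm_natCast]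
              _ ≤ (n : ℝ)⁻¹ * (C * ((C + 1) * ‖x₀‖)) := by
                  refine mul_le_mul_of_nonneg_left ?_ (by positivity)
                  calc ‖S (Yn n)‖ ≤ ‖S‖ * ‖Yn n‖ := S.le_opNorm _
                    _ ≤ C * ((C + 1) * ‖x₀‖) := by
                        refine mul_le_mul ?_ (hYnbd n) (norm_nonneg _) hC0
                        simpa using hSC 1
              _ = C * ((C + 1) * ‖x₀‖) / n := by rw [div_eq_inv_mul]
          · exact tendsto_const_div_atTop_nhds_zero_nat _
        exact tendsto_nhds_unique (tendsto_apply hP u) h2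
      obtain ⟨v, hv1, hv2⟩ := exists_solution hSC hP u hPu
      have hSku : ∀ k : ℕ, (S ^ k) u = (S ^ k) v - (S ^ (k + 1)) v := by
        intro k
        rw [← hv1, map_sub, pow_succ, ContinuousLinearMap.mul_apply]
      have hYn1 : ∀ n : ℕ, Yn n = v - (S ^ n) v := by
        intro n
        simp only [hYndef]
        calc ∑ k ∈ Finset.range n, lam ^ (n - 1 - k) • (S ^ k) u
            = ∑ k ∈ Finset.range n, ((S ^ k) v - (S ^ (k + 1)) v) := by
              refine Finset.sum_congr rfl fun k _ => ?_
              rw [hl, one_pow, one_smul, hSku k]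
          _ = (S ^ 0) v - (S ^ n) v := Finset.sum_range_sub' (fun k => (S ^ k) v) n
          _ = v - (S ^ n) v := by rw [pow_zero, ContinuousLinearMap.one_apply]
      refine ⟨x₀ + ↑v, ?_⟩
      have key : ∀ n : ℕ, n ≠ 0 →
          cesaroMean T n x₀ = x₀ + ((v - cesaroMean S n v : ↥(LinearMap.ker (f : X →ₗ[ℂ] ℂ))) : X) := by
        intro n hn
        rw [hRx n]
        have hσ : (n : ℂ)⁻¹ * ∑ j ∈ Finset.range n, lam ^ (j + 1) = 1 := by
          rw [hl]
          simp only [one_pow, Finset.sum_const, Finset.card_range, nsmul_eq_mul, mul_one]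
          exact inv_mul_cancel₀ (Nat.cast_ne_zero.mpr hn)
        have hw : (n : ℂ)⁻¹ • ∑ j ∈ Finset.range n, Yn (j + 1) = v - cesaroMean S n v := by
          have hsum : ∑ j ∈ Finset.range n, Yn (j + 1)
              = n • v - ∑ j ∈ Finset.range n, (S ^ (j + 1)) v := by
            rw [Finset.sum_congr rfl fun j _ => hYn1 (j + 1), Finset.sum_sub_distrib,
              Finset.sum_const, Finset.card_range]
          rw [hsum, smul_sub, cesaro_apply, ← Nat.cast_smul_eq_nsmul ℂ, smul_smul,
            inv_mul_cancel₀ (Nat.cast_ne_zero.mpr hn), one_smul]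
        rw [hσ, one_smul, hw]
      have hlim : Tendsto (fun n => x₀ + ((v - cesaroMean S n v : ↥(LinearMap.ker (f : X →ₗ[ℂ] ℂ))) : X))
          atTop (𝓝 (x₀ + ↑v)) := by
        have h1 : Tendsto (fun n => v - cesaroMean S n v) atTop (𝓝 (v - P v)) :=
          tendsto_const_nhds.sub (tendsto_apply hP v)
        rw [hv2, sub_zero] at h1
        exact tendsto_const_nhds.add ((continuous_subtype_val.tendsto v).comp h1)
      refine Tendsto.congr' ?_ hlim
      filter_upwards [eventually_ne_atTop 0] with n hn
      exact (key n hn).symm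
    · -- case lam ≠ 1
      have hlam0 : lam - 1 ≠ 0 := sub_ne_zero.mpr hl
      have hgm : ∀ m : ℕ, (∑ i ∈ Finset.range m, lam ^ i)
          = (lam ^ m - 1) * (lam - 1)⁻¹ := by
        intro m
        rw [geom_sum_eq hl, div_eq_mul_inv]
      have hlY : ∀ n : ℕ, lam • Yn n = ∑ k ∈ Finset.range n, lam ^ (n - k) • (S ^ k) u := by
        intro n
        simp only [hYndef]
        rw [Finset.smul_sum]
        refine Finset.sum_congr rfl fun k hk => ?_
        rw [smul_smul, ← pow_succ']
        congr 2
        have := Finset.mem_range.mp hk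
        omega
      have hw : ∀ n : ℕ, (n : ℂ)⁻¹ • ∑ j ∈ Finset.range n, Yn (j + 1)
          = (lam - 1)⁻¹ • ((n : ℂ)⁻¹ • (lam • Yn n)
              - (n : ℂ)⁻¹ • ∑ k ∈ Finset.range n, (S ^ k) u) := by
        intro n
        have hinner : ∑ k ∈ Finset.range n, (∑ i ∈ Finset.range (n - k), lam ^ i) • (S ^ k) u
            = (lam - 1)⁻¹ • (lam • Yn n - ∑ k ∈ Finset.range n, (S ^ k) u) := by
          rw [hlY n, ← Finset.sum_sub_distrib, Finset.smul_sum]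
          refine Finset.sum_congr rfl fun k _ => ?_
          rw [hgm (n - k)]
          module
        rw [hA n, hinner, smul_comm ((n : ℂ)⁻¹) ((lam - 1)⁻¹), smul_sub]
      have h1 : Tendsto (fun n : ℕ => (n : ℂ)⁻¹ • (lam • Yn n)) atTop
          (𝓝 (0 : ↥(LinearMap.ker (f : X →ₗ[ℂ] ℂ)))) := by
        apply squeeze_zero_norm (a := fun n : ℕ => (C + 1) * ‖x₀‖ / n)
        · intro n
          calc ‖(n : ℂ)⁻¹ • (lam • Yn n)‖
              = ‖(n : ℂ)⁻¹‖ * ‖lam • Yn n‖ := norm_smul (β := ↥(LinearMap.ker (f : X →ₗ[ℂ] ℂ))) _ _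
            _ = (n : ℝ)⁻¹ * (‖lam‖ * ‖Yn n‖) := by
                rw [norm_inv, Complex.norm_natCast, norm_smul (β := ↥(LinearMap.ker (f : X →ₗ[ℂ] ℂ)))]
            _ ≤ (n : ℝ)⁻¹ * (1 * ((C + 1) * ‖x₀‖)) := by
                refine mul_le_mul_of_nonneg_left ?_ (by positivity)
                exact mul_le_mul hlam1 (hYnbd n) (norm_nonneg _) one_pos.le
            _ = (C + 1) * ‖x₀‖ / n := by rw [one_mul, div_eq_inv_mul]
        · exact tendsto_const_div_atTop_nhds_zero_nat _
      have h2 : Tendsto (fun n : ℕ => (n : ℂ)⁻¹ • ∑ k ∈ Finset.range n, (S ^ k) u) atTop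
          (𝓝 (P u)) := by
        have hid : ∀ n : ℕ, (n : ℂ)⁻¹ • ∑ k ∈ Finset.range n, (S ^ k) u
            = cesaroMean S n u + ((n : ℂ)⁻¹ • u - (n : ℂ)⁻¹ • (S ^ n) u) := by
          intro n
          have hs : ∑ k ∈ Finset.range n, (S ^ k) u
              = u + ∑ j ∈ Finset.range n, (S ^ (j + 1)) u - (S ^ n) u := by
            have h4 := Finset.sum_range_succ (fun k => (S ^ k) u) n
            have h5 := Finset.sum_range_succ' (fun k => (S ^ k) u) n
            rw [h4] at h5
            simp only [pow_zero, ContinuousLinearMap.one_apply] at h5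
            rw [eq_sub_iff_add_eq, h5, add_comm]
          rw [hs, cesaro_apply, smul_sub, smul_add]
          abel
        have h3 : Tendsto (fun n : ℕ => (n : ℂ)⁻¹ • u - (n : ℂ)⁻¹ • (S ^ n) u) atTop
            (𝓝 (0 : ↥(LinearMap.ker (f : X →ₗ[ℂ] ℂ)))) := by
          apply squeeze_zero_norm (a := fun n : ℕ => (‖u‖ + C * ‖u‖) / n)
          · intro n
            calc ‖(n : ℂ)⁻¹ • u - (n : ℂ)⁻¹ • (S ^ n) u‖
                ≤ ‖(n : ℂ)⁻¹ • u‖ + ‖(n : ℂ)⁻¹ • (S ^ n) u‖ := norm_sub_le _ _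
              _ ≤ (n : ℝ)⁻¹ * ‖u‖ + (n : ℝ)⁻¹ * (C * ‖u‖) := by
                  refine add_le_add ?_ ?_
                  · rw [norm_smul (β := ↥(LinearMap.ker (f : X →ₗ[ℂ] ℂ))), norm_inv, Complex.norm_natCast]
                  · rw [norm_smul (β := ↥(LinearMap.ker (f : X →ₗ[ℂ] ℂ))), norm_inv, Complex.norm_natCast]
                    refine mul_le_mul_of_nonneg_left ?_ (by positivity)
                    exact le_trans ((S ^ n).le_opNorm _)
                      (mul_le_mul_of_nonneg_right (hSC n) (norm_nonneg _))
              _ = (‖u‖ + C * ‖u‖) / n := by rw [div_eq_inv_mul]; ring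
          · exact tendsto_const_div_atTop_nhds_zero_nat _
        have h6 := (tendsto_apply hP u).add h3
        rw [add_zero] at h6
        exact Tendsto.congr (fun n => (hid n).symm) h6
      have hwlim : Tendsto (fun n : ℕ => (n : ℂ)⁻¹ • ∑ j ∈ Finset.range n, Yn (j + 1)) atTop
          (𝓝 ((1 - lam)⁻¹ • P u)) := by
        have h7 := (h1.sub h2).const_smul ((lam - 1)⁻¹)
        have hval : (lam - 1)⁻¹ • ((0 : ↥(LinearMap.ker (f : X →ₗ[ℂ] ℂ))) - P u) = (1 - lam)⁻¹ • P u := by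
          rw [zero_sub, smul_neg, ← neg_smul, ← inv_neg, neg_sub]
        rw [hval] at h7
        exact Tendsto.congr (fun n => (hw n).symm) h7
      have hσ : Tendsto
          (fun n : ℕ => ((n : ℂ)⁻¹ * ∑ j ∈ Finset.range n, lam ^ (j + 1)) • x₀) atTop
          (𝓝 (0 : X)) := by
        apply squeeze_zero_norm (a := fun n : ℕ => 2 / ‖lam - 1‖ * ‖x₀‖ / n)
        · intro n
          have hsum : ‖∑ j ∈ Finset.range n, lam ^ (j + 1)‖ ≤ 2 / ‖lam - 1‖ := by
            have he : ∑ j ∈ Finset.range n, lam ^ (j + 1)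
                = lam * ((lam ^ n - 1) / (lam - 1)) := by
              rw [← geom_sum_eq hl n, Finset.mul_sum]
              exact Finset.sum_congr rfl fun j _ => pow_succ' lam j
            rw [he, norm_mul, norm_div]
            calc ‖lam‖ * (‖lam ^ n - 1‖ / ‖lam - 1‖) ≤ 1 * (2 / ‖lam - 1‖) := by
                  refine mul_le_mul hlam1 ?_ (by positivity) one_pos.le
                  refine div_le_div_of_nonneg_right ?_ ?_
                  · calc ‖lam ^ n - 1‖ ≤ ‖lam ^ n‖ + ‖(1 : ℂ)‖ := norm_sub_le _ _
                      _ ≤ 1 + 1 := by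
                          refine add_le_add ?_ (by norm_num)
                          rw [norm_pow]
                          exact pow_le_one₀ (norm_nonneg _) hlam1
                      _ = 2 := by norm_num
                  · exact (norm_pos_iff.mpr hlam0).le
              _ = 2 / ‖lam - 1‖ := one_mul _
          calc ‖((n : ℂ)⁻¹ * ∑ j ∈ Finset.range n, lam ^ (j + 1)) • x₀‖
              = ‖(n : ℂ)⁻¹ * ∑ j ∈ Finset.range n, lam ^ (j + 1)‖ * ‖x₀‖ :=
                norm_smul (β := X) _ _
            _ = (n : ℝ)⁻¹ * ‖∑ j ∈ Finset.range n, lam ^ (j + 1)‖ * ‖x₀‖ := by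
                rw [norm_mul, norm_inv, Complex.norm_natCast]
            _ ≤ (n : ℝ)⁻¹ * (2 / ‖lam - 1‖) * ‖x₀‖ := by
                refine mul_le_mul_of_nonneg_right ?_ (norm_nonneg _)
                exact mul_le_mul_of_nonneg_left hsum (by positivity)
            _ = 2 / ‖lam - 1‖ * ‖x₀‖ / n := by field_simp
        · exact tendsto_const_div_atTop_nhds_zero_nat _
      refine ⟨(((1 - lam)⁻¹ • P u : ↥(LinearMap.ker (f : X →ₗ[ℂ] ℂ))) : X), ?_⟩
      have h8 := hσ.add
        ((continuous_subtype_val.tendsto ((1 - lam)⁻¹ • P u)).comp hwlim)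
      rw [zero_add] at h8
      exact Tendsto.congr (fun n => (hRx n).symm) h8
  obtain ⟨q, hq⟩ := hmain
  have hπmem : ∀ x : X, (ContinuousLinearMap.id ℂ X - f.smulRight x₀) x ∈ LinearMap.ker (f : X →ₗ[ℂ] ℂ) := by
    intro x
    simp only [ContinuousLinearMap.sub_apply, ContinuousLinearMap.id_apply,
      ContinuousLinearMap.smulRight_apply, LinearMap.mem_ker, ContinuousLinearMap.coe_coe, map_sub, map_smul,
      smul_eq_mul, hx₀, mul_one, sub_self]
  set π : X →L[ℂ] ↥(LinearMap.ker (f : X →ₗ[ℂ] ℂ)) :=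
    (ContinuousLinearMap.id ℂ X - f.smulRight x₀).codRestrict (LinearMap.ker (f : X →ₗ[ℂ] ℂ)) hπmem
    with hπdef
  have hπx : ∀ x : X, ((π x : X)) = x - f x • x₀ := fun x => rfl
  have hsplit : ∀ n : ℕ, cesaroMean T n
      = (LinearMap.ker (f : X →ₗ[ℂ] ℂ)).subtypeL.comp ((cesaroMean S n).comp π)
        + f.smulRight (cesaroMean T n x₀) := by
    intro n
    ext x
    simp only [ContinuousLinearMap.add_apply, ContinuousLinearMap.comp_apply,
      ContinuousLinearMap.smulRight_apply, Submodule.subtypeL_apply]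
    rw [hcoeM n (π x), hπx x, map_sub, map_smul]
    simp
  refine ⟨(LinearMap.ker (f : X →ₗ[ℂ] ℂ)).subtypeL.comp (P.comp π) + f.smulRight q, ?_⟩
  have hApart : Tendsto (fun n : ℕ => (LinearMap.ker (f : X →ₗ[ℂ] ℂ)).subtypeL.comp ((cesaroMean S n).comp π))
      atTop (𝓝 ((LinearMap.ker (f : X →ₗ[ℂ] ℂ)).subtypeL.comp (P.comp π))) := by
    have hcont : Continuous fun A : ↥(LinearMap.ker (f : X →ₗ[ℂ] ℂ)) →L[ℂ] ↥(LinearMap.ker (f : X →ₗ[ℂ] ℂ)) =>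
        (LinearMap.ker (f : X →ₗ[ℂ] ℂ)).subtypeL.comp (A.comp π) :=
      ((ContinuousLinearMap.compL ℂ X ↥(LinearMap.ker (f : X →ₗ[ℂ] ℂ)) X
          ((LinearMap.ker (f : X →ₗ[ℂ] ℂ)).subtypeL)).continuous).comp
        (((ContinuousLinearMap.compL ℂ X ↥(LinearMap.ker (f : X →ₗ[ℂ] ℂ)) ↥(LinearMap.ker (f : X →ₗ[ℂ] ℂ))).flip
          π).continuous)
    exact (hcont.tendsto P).comp hP
  have hBpart : Tendsto (fun n : ℕ => f.smulRight (cesaroMean T n x₀)) atTop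
      (𝓝 (f.smulRight q)) := by
    have hcont : Continuous fun y : X => f.smulRight y :=
      (ContinuousLinearMap.smulRightL ℂ X X f).continuous
    exact (hcont.tendsto q).comp hq
  have h9 := hApart.add hBpart
  exact Tendsto.congr (fun n => (hsplit n).symm) h9
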